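/- (Second-order expansion of the Jensen–Shannon divergence.) Let P(·|γ) be a family of probability distributions on 𝒳 such that each map γ ↦ P(x|γ) is twice continuously differentiable on an open interval. Then for every γ in that interval, lim_{δγ→0} JS[P(·|γ), P(·|γ+δγ)] / δγ² = F(γ)/8. In particular, 8·JS[P(·|γ), P(·|γ+δγ)]/δγ² converges to the Fisher information F(γ) as δγ → 0. -/

import Mathlib

open Finset Real Topology Filter

/-- Kullback–Leibler divergence on a finite set. -/
noncomputable def klDiv {X : Type*} [Fintype X] (p q : X → ℝ) : ℝ :=
  ∑ x : X, p x * Real.log (p x / q x)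

/-- Jensen–Shannon divergence on a finite set. -/
noncomputable def jsDiv {X : Type*} [Fintype X] (p q : X → ℝ) : ℝ :=
  (1 / 2) * klDiv p (fun x => (p x + q x) / 2) + (1 / 2) * klDiv q (fun x => (p x + q x) / 2)

lemma auxJS (p d c : ℝ) (hp : 0 < p) (q q' : ℝ → ℝ)
    (hq0 : q 0 = p) (hq'0 : q' 0 = d)
    (hqd : ∀ᶠ δ in 𝓝 0, HasDerivAt q (q' δ) δ)
    (hq'' : HasDerivAt q' c 0) :
    Tendsto (fun δ : ℝ =>
      ((1/2) * (p * Real.log (p / ((p + q δ)/2))) +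
       (1/2) * (q δ * Real.log (q δ / ((p + q δ)/2)))) / δ^2)
      (𝓝[≠] 0) (𝓝 (d^2/(8*p))) := by
  have hqc : ContinuousAt q 0 := hqd.self_of_nhds.continuousAt
  have hqt : Tendsto q (𝓝 0) (𝓝 p) := by
    have := hqc.tendsto; rwa [hq0] at this
  have hqpos : ∀ᶠ δ in 𝓝 0, 0 < q δ := hqt.eventually (eventually_gt_nhds hp)
  set ψ : ℝ → ℝ := fun δ =>
    (1/2) * (p * (Real.log p - Real.log ((p + q δ)/2))) +
    (1/2) * (q δ * (Real.log (q δ) - Real.log ((p + q δ)/2))) with hψ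
  set ψ' : ℝ → ℝ := fun δ => q' δ * (Real.log (q δ) - Real.log ((p + q δ)/2)) / 2 with hψ'
  have hψd : ∀ᶠ δ in 𝓝 0, HasDerivAt ψ (ψ' δ) δ := by
    filter_upwards [hqd, hqpos] with δ hq hpos
    have hpq : (0:ℝ) < (p + q δ)/2 := by positivity
    have h1 : HasDerivAt (fun δ => (p + q δ)/2) (q' δ / 2) δ := (hq.const_add p).div_const 2
    have h2 : HasDerivAt (fun δ => Real.log ((p + q δ)/2)) ((q' δ/2) / ((p + q δ)/2)) δ :=
      h1.log hpq.ne'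
    have h3 : HasDerivAt (fun δ => Real.log (q δ)) (q' δ / q δ) δ := hq.log hpos.ne'
    have h4 := (((h2.const_sub (Real.log p)).const_mul p).const_mul (1/2:ℝ)).add
      (((hq.mul (h3.sub h2))).const_mul (1/2:ℝ))
    refine h4.congr_deriv ?_
    simp only [hψ', Pi.sub_apply]
    have hne : q δ ≠ 0 := hpos.ne'
    have hne2 : p + q δ ≠ 0 := by positivity
    field_simp
    ring
  have hψ'0 : ψ' 0 = 0 := by
    simp [hψ', hq0]
  have hψ'' : HasDerivAt ψ' (d^2/(4*p)) 0 := by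
    have hq00 : HasDerivAt q (q' 0) 0 := hqd.self_of_nhds
    have h3 : HasDerivAt (fun δ => Real.log (q δ)) (q' 0 / q 0) 0 :=
      hq00.log (by rw [hq0]; exact hp.ne')
    have h2 : HasDerivAt (fun δ => Real.log ((p + q δ)/2)) ((q' 0/2) / ((p + q 0)/2)) 0 :=
      ((hq00.const_add p).div_const 2).log (by rw [hq0]; positivity)
    have h5 := ((hq''.mul (h3.sub h2)).div_const 2)
    refine h5.congr_deriv ?_
    simp only [Pi.sub_apply]
    rw [hq0, hq'0]
    have : (p + p)/2 = p := by ring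
    rw [this]
    field_simp
    ring
  -- L'Hopital
  have hg : ∀ᶠ δ in 𝓝[≠] (0:ℝ), HasDerivAt (fun δ : ℝ => δ^2) (2*δ) δ := by
    filter_upwards with δ
    simpa [mul_comm] using (hasDerivAt_pow 2 δ)
  have hg' : ∀ᶠ δ in 𝓝[≠] (0:ℝ), (2*δ) ≠ 0 := by
    filter_upwards [self_mem_nhdsWithin] with δ hδ
    simp only [Set.mem_compl_iff, Set.mem_singleton_iff] at hδ
    exact mul_ne_zero two_ne_zero hδ
  have hψ0 : ψ 0 = 0 := by simp [hψ, hq0]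
  have hψcont : Tendsto ψ (𝓝[≠] 0) (𝓝 0) := by
    have := (hψd.self_of_nhds.continuousAt).tendsto
    rw [hψ0] at this
    exact this.mono_left nhdsWithin_le_nhds
  have hgt : Tendsto (fun δ : ℝ => δ^2) (𝓝[≠] (0:ℝ)) (𝓝 0) := by
    have : Tendsto (fun δ : ℝ => δ^2) (𝓝 (0:ℝ)) (𝓝 ((0:ℝ)^2)) :=
      (continuous_pow 2).continuousAt
    simpa using this.mono_left nhdsWithin_le_nhds
  have hdiv : Tendsto (fun δ => ψ' δ / (2*δ)) (𝓝[≠] (0:ℝ)) (𝓝 (d^2/(8*p))) := by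
    have hslope := hasDerivAt_iff_tendsto_slope.mp hψ''
    have h := hslope.div_const 2
    have heq : (fun δ => slope ψ' 0 δ / 2) = fun δ => ψ' δ / (2*δ) := by
      funext δ
      rw [slope_def_field, hψ'0]
      field_simp
      ring
    rw [heq] at h
    have : d^2/(4*p)/2 = d^2/(8*p) := by ring
    rwa [this] at h
  have hmain : Tendsto (fun δ => ψ δ / δ^2) (𝓝[≠] (0:ℝ)) (𝓝 (d^2/(8*p))) :=
    HasDerivAt.lhopital_zero_nhdsNE (hψd.filter_mono nhdsWithin_le_nhds) hg hg' hψcont hgt hdiv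
  refine hmain.congr' ?_
  filter_upwards [hqpos.filter_mono nhdsWithin_le_nhds] with δ hpos
  have hpq : (0:ℝ) < (p + q δ)/2 := by positivity
  rw [hψ]
  rw [Real.log_div hp.ne' hpq.ne', Real.log_div hpos.ne' hpq.ne']

/-- second-order expansion of the Jensen–Shannon divergence:
`JS[P(·|γ), P(·|γ+δγ)]/δγ² → F(γ)/8` as `δγ → 0`. -/
theorem stmt15 {X : Type*} [Fintype X] [Nonempty X]
    (I : Set ℝ) (hIopen : IsOpen I) (hIconn : I.OrdConnected)
    (P : ℝ → X → ℝ)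
    (hpos : ∀ γ ∈ I, ∀ x : X, 0 < P γ x)
    (hsum : ∀ γ ∈ I, ∑ x : X, P γ x = 1)
    (hC2 : ∀ x : X, ContDiffOn ℝ 2 (fun t => P t x) I)
    (γ : ℝ) (hγ : γ ∈ I) :
    Filter.Tendsto (fun δ : ℝ => jsDiv (P γ) (P (γ + δ)) / δ ^ 2)
      (𝓝[≠] 0)
      (𝓝 ((∑ x : X, (deriv (fun t => P t x) γ) ^ 2 / P γ x) / 8)) ∧
    Filter.Tendsto (fun δ : ℝ => 8 * jsDiv (P γ) (P (γ + δ)) / δ ^ 2)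
      (𝓝[≠] 0)
      (𝓝 (∑ x : X, (deriv (fun t => P t x) γ) ^ 2 / P γ x)) := by
  have hmemI : ∀ᶠ δ in 𝓝 (0:ℝ), γ + δ ∈ I := by
    have hcont : ContinuousAt (fun δ : ℝ => γ + δ) 0 := by fun_prop
    have := hcont.preimage_mem_nhds (by rw [add_zero]; exact hIopen.mem_nhds hγ)
    filter_upwards [this] with δ hδ using hδ
  have key : ∀ x : X, Tendsto (fun δ : ℝ =>
      ((1/2) * (P γ x * Real.log (P γ x / ((P γ x + P (γ+δ) x)/2))) +
       (1/2) * (P (γ+δ) x * Real.log (P (γ+δ) x / ((P γ x + P (γ+δ) x)/2)))) / δ^2)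
      (𝓝[≠] 0) (𝓝 ((deriv (fun t => P t x) γ)^2/(8 * P γ x))) := by
    intro x
    set f : ℝ → ℝ := fun t => P t x with hf
    have h2 : ContDiffOn ℝ (1+1) f I := by
      have := hC2 x
      norm_num at this ⊢
      exact this
    rw [contDiffOn_succ_iff_deriv_of_isOpen hIopen] at h2
    obtain ⟨hdf, -, hd1⟩ := h2
    have hdd : DifferentiableAt ℝ (deriv f) γ :=
      (hd1.differentiableOn one_ne_zero).differentiableAt (hIopen.mem_nhds hγ)
    have haff : ∀ δ : ℝ, HasDerivAt (fun y : ℝ => γ + y) 1 δ := fun δ =>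
      (hasDerivAt_id δ).const_add γ
    have hqd : ∀ᶠ δ in 𝓝 (0:ℝ), HasDerivAt (fun δ => P (γ+δ) x) (deriv f (γ+δ)) δ := by
      filter_upwards [hmemI] with δ hmem
      have hfd : HasDerivAt f (deriv f (γ+δ)) (γ+δ) :=
        (hdf.differentiableAt (hIopen.mem_nhds hmem)).hasDerivAt
      simpa [Function.comp_def] using hfd.comp δ (haff δ)
    have hq'' : HasDerivAt (fun δ => deriv f (γ+δ)) (deriv (deriv f) γ) 0 := by
      have hfd : HasDerivAt (deriv f) (deriv (deriv f) (γ+0)) (γ+0) := by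
        rw [add_zero]; exact hdd.hasDerivAt
      simpa [Function.comp_def] using hfd.comp 0 (haff 0)
    exact auxJS (P γ x) (deriv f γ) (deriv (deriv f) γ) (hpos γ hγ x)
      (fun δ => P (γ+δ) x) (fun δ => deriv f (γ+δ))
      (by simp) (by simp) hqd hq''
  have hsumt : Tendsto (fun δ : ℝ => jsDiv (P γ) (P (γ + δ)) / δ ^ 2) (𝓝[≠] 0)
      (𝓝 ((∑ x : X, (deriv (fun t => P t x) γ) ^ 2 / P γ x) / 8)) := by
    have hT := tendsto_finset_sum (Finset.univ : Finset X) (fun x _ => key x)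
    have heq : ∀ δ : ℝ, jsDiv (P γ) (P (γ + δ)) / δ ^ 2 =
        ∑ x : X, ((1/2) * (P γ x * Real.log (P γ x / ((P γ x + P (γ+δ) x)/2))) +
         (1/2) * (P (γ+δ) x * Real.log (P (γ+δ) x / ((P γ x + P (γ+δ) x)/2)))) / δ^2 := by
      intro δ
      rw [← Finset.sum_div]
      congr 1
      simp only [jsDiv, klDiv, Finset.mul_sum, ← Finset.sum_add_distrib]
    have hval : (∑ x : X, (deriv (fun t => P t x) γ) ^ 2 / P γ x) / 8 =
        ∑ x : X, (deriv (fun t => P t x) γ)^2/(8 * P γ x) := by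
      rw [Finset.sum_div]
      refine Finset.sum_congr rfl fun x _ => ?_
      rw [div_div, mul_comm]
    rw [hval]
    exact hT.congr (fun δ => (heq δ).symm)
  refine ⟨hsumt, ?_⟩
  have h8 := hsumt.const_mul (8:ℝ)
  have : (8:ℝ) * ((∑ x : X, (deriv (fun t => P t x) γ) ^ 2 / P γ x) / 8) =
      ∑ x : X, (deriv (fun t => P t x) γ) ^ 2 / P γ x := by ring
  rw [this] at h8
  exact h8.congr fun δ => by rw [mul_div_assoc]
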